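/- For every n ≥ 1, A_n · B_n + s·B_n = t · J_{v_n, t·4^n}, where v_n := (v+(2^{n+1}−4)t)·2^{n−1}. -/

import Mathlib

open Matrix Kronecker

def Jmat (m l : ℕ) : Matrix (Fin m) (Fin l) ℤ := Matrix.of fun _ _ => 1
def Kmat (m : ℕ) : Matrix (Fin m) (Fin m) ℤ :=
  Matrix.of fun i j => if (j : ℕ) = m - 1 - (i : ℕ) then 1 else 0
def kron {m n p q : ℕ} (A : Matrix (Fin m) (Fin n) ℤ) (B : Matrix (Fin p) (Fin q) ℤ) :
    Matrix (Fin (m * p)) (Fin (n * q)) ℤ :=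
  Matrix.reindex finProdFinEquiv finProdFinEquiv (A ⊗ₖ B)
def castM {m n m' n' : ℕ} (hm : m = m') (hn : n = n') (A : Matrix (Fin m) (Fin n) ℤ) :
    Matrix (Fin m') (Fin n') ℤ :=
  Matrix.reindex (finCongr hm) (finCongr hn) A
def alphaM {m l : ℕ} (s : ℕ) (X : Matrix (Fin m) (Fin l) ℤ) :
    Matrix (Fin (m / s)) (Fin l) ℤ :=
  Matrix.of fun i j => X (Fin.castLE (Nat.div_le_self m s) i) j
def vstack {m₁ m₂ l : ℕ} (X : Matrix (Fin m₁) (Fin l) ℤ) (Y : Matrix (Fin m₂) (Fin l) ℤ) :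
    Matrix (Fin (m₁ + m₂)) (Fin l) ℤ :=
  Matrix.reindex finSumFinEquiv (Equiv.refl _) (Matrix.fromRows X Y)
def hstack {m l₁ l₂ : ℕ} (X : Matrix (Fin m) (Fin l₁) ℤ) (Y : Matrix (Fin m) (Fin l₂) ℤ) :
    Matrix (Fin m) (Fin (l₁ + l₂)) ℤ :=
  Matrix.reindex (Equiv.refl _) finSumFinEquiv (Matrix.fromCols X Y)
def block2 {a b c d : ℕ} (A : Matrix (Fin a) (Fin c) ℤ) (B : Matrix (Fin a) (Fin d) ℤ)
    (C : Matrix (Fin b) (Fin c) ℤ) (D : Matrix (Fin b) (Fin d) ℤ) :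
    Matrix (Fin (a + b)) (Fin (c + d)) ℤ :=
  Matrix.reindex finSumFinEquiv finSumFinEquiv (Matrix.fromBlocks A B C D)
lemma four_pow_eq (n : ℕ) : (4 : ℕ) ^ n = 2 ^ n * 2 ^ n := by
  rw [show (4 : ℕ) = 2 * 2 from rfl, mul_pow]
lemma t_four_pow_div (t n : ℕ) : t * 4 ^ n / 2 ^ n = t * 2 ^ n := by
  rw [four_pow_eq, ← mul_assoc, Nat.mul_div_cancel _ (by positivity)]
def vnum (v t n : ℕ) : ℕ := (v + (2 ^ (n + 1) - 4) * t) * 2 ^ (n - 1)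
lemma vnum_one (v t : ℕ) : vnum v t 1 = v := by norm_num [vnum]
lemma vnum_succ (v t n : ℕ) :
    vnum v t (n + 2) = 2 * vnum v t (n + 1) + 2 * (t * 4 ^ (n + 1)) := by
  unfold vnum
  simp only [show n + 2 + 1 = n + 3 from rfl, show n + 2 - 1 = n + 1 from rfl,
    show n + 1 + 1 = n + 2 from rfl, show n + 1 - 1 = n from rfl]
  have h2 : (4 : ℕ) ≤ 2 ^ (n + 2) := by
    calc (4 : ℕ) = 2 ^ 2 := rfl
    _ ≤ 2 ^ (n + 2) := Nat.pow_le_pow_right (by norm_num) (by omega)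
  have h3 : (4 : ℕ) ≤ 2 ^ (n + 3) := le_trans h2 (Nat.pow_le_pow_right (by norm_num) (by omega))
  rw [four_pow_eq]
  zify [h2, h3]
  ring
def Pmat (t n : ℕ) : Matrix (Fin (t * 4 ^ n)) (Fin (t * 4 ^ n)) ℤ :=
  castM (by rw [four_pow_eq]; ring) (by rw [four_pow_eq]; ring)
    (kron (kron (Jmat (2 ^ n) 1) (Kmat (2 ^ n))) (Jmat t (t * 2 ^ n)))
def Pone (t : ℕ) : Matrix (Fin (4 * t)) (Fin (4 * t)) ℤ :=
  castM (by ring) (by ring) (kron (kron (Jmat 2 1) (Kmat 2)) (Jmat t (2 * t)))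

/-- The recursively defined sequence `P'_n` of Lemma 2. -/
def P'mat (t : ℕ) : (n : ℕ) → Matrix (Fin (t * 4 ^ n)) (Fin (t * 4 ^ n)) ℤ
  | 0 => 0
  | 1 => castM (by ring) (by ring) (kron (kron (Jmat 2 1) (Kmat 2)) (Jmat t (2 * t)))
  | (n + 2) =>
      castM
        (by rw [t_four_pow_div, four_pow_eq]; ring)
        (by ring)
        (kron (kron (kron (Jmat (2 ^ (n + 2)) 1) (Kmat 2))
          (alphaM (2 ^ (n + 1)) (P'mat t (n + 1)))) (Jmat 1 2))

/-- The recursively defined sequence `B_n` (with `B_1` given). -/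
def Bmat (t v : ℕ) (B₁ : Matrix (Fin v) (Fin (4 * t)) ℤ) :
    (n : ℕ) → Matrix (Fin (vnum v t n)) (Fin (t * 4 ^ n)) ℤ
  | 0 => 0
  | 1 => castM (vnum_one v t).symm (by ring) B₁
  | (n + 2) =>
      castM (by rw [vnum_succ]; try ring) (by ring)
        (vstack (kron (kron (Kmat 2) (Bmat t v B₁ (n + 1))) (Jmat 1 2))
          (kron (kron (1 : Matrix (Fin 2) (Fin 2) ℤ) (Pmat t (n + 1))) (Jmat 1 2)))

/-- The recursively defined sequence `C_n` (with `C_1` given). -/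
def Cmat (t v : ℕ) (C₁ : Matrix (Fin (4 * t)) (Fin v) ℤ) :
    (n : ℕ) → Matrix (Fin (t * 4 ^ n)) (Fin (vnum v t n)) ℤ
  | 0 => 0
  | 1 => castM (by ring) (vnum_one v t).symm C₁
  | (n + 2) =>
      castM (by rw [t_four_pow_div, four_pow_eq]; ring) (by rw [vnum_succ]; try ring)
        (hstack
          (kron (kron (Jmat (2 ^ (n + 2)) 1) (1 : Matrix (Fin 2) (Fin 2) ℤ))
            (alphaM (2 ^ (n + 1)) (Cmat t v C₁ (n + 1))))
          (kron (kron (Jmat (2 ^ (n + 2)) 1) (1 : Matrix (Fin 2) (Fin 2) ℤ))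
            (alphaM (2 ^ (n + 1)) (Pmat t (n + 1)))))

/-- The recursively defined sequence `A_n` (with `A_1`, `B_1`, `C_1` given). -/
def Amat (t v : ℕ) (A₁ : Matrix (Fin v) (Fin v) ℤ) (B₁ : Matrix (Fin v) (Fin (4 * t)) ℤ)
    (C₁ : Matrix (Fin (4 * t)) (Fin v) ℤ) :
    (n : ℕ) → Matrix (Fin (vnum v t n)) (Fin (vnum v t n)) ℤ
  | 0 => 0
  | 1 => castM (vnum_one v t).symm (vnum_one v t).symm A₁
  | (n + 2) =>
      castM (by rw [vnum_succ]) (by rw [vnum_succ])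
        (block2 (kron (1 : Matrix (Fin 2) (Fin 2) ℤ) (Amat t v A₁ B₁ C₁ (n + 1)))
          (kron (1 : Matrix (Fin 2) (Fin 2) ℤ) (Bmat t v B₁ (n + 1)))
          (kron (Kmat 2) (Cmat t v C₁ (n + 1)))
          (kron (Kmat 2) (Pmat t (n + 1))))

section Toolkit
open Matrix

theorem castM_apply {m n m' n' : ℕ} (hm : m = m') (hn : n = n')
    (A : Matrix (Fin m) (Fin n) ℤ) (i : Fin m') (j : Fin n') :
    castM hm hn A i j = A (Fin.cast hm.symm i) (Fin.cast hn.symm j) := rfl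

@[simp] theorem castM_rfl {m n : ℕ} (A : Matrix (Fin m) (Fin n) ℤ) :
    castM rfl rfl A = A := rfl

/-- Matrix equality up to recasting of (propositionally equal) dimensions. -/
def MEq {m n m' n' : ℕ} (A : Matrix (Fin m) (Fin n) ℤ)
    (B : Matrix (Fin m') (Fin n') ℤ) : Prop :=
  ∃ (hm : m = m') (hn : n = n'), castM hm hn A = B

theorem MEq.refl {m n : ℕ} {A : Matrix (Fin m) (Fin n) ℤ} : MEq A A := ⟨Eq.refl _, Eq.refl _, castM_rfl A⟩

theorem MEq.of_eq {m n : ℕ} {A B : Matrix (Fin m) (Fin n) ℤ} (h : A = B) : MEq A B :=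
  ⟨rfl, rfl, h⟩

theorem MEq.symm {m n m' n' : ℕ} {A : Matrix (Fin m) (Fin n) ℤ}
    {B : Matrix (Fin m') (Fin n') ℤ} (h : MEq A B) : MEq B A := by
  obtain ⟨rfl, rfl, rfl⟩ := h; exact MEq.refl

theorem MEq.trans {m n m' n' m'' n'' : ℕ} {A : Matrix (Fin m) (Fin n) ℤ}
    {B : Matrix (Fin m') (Fin n') ℤ} {C : Matrix (Fin m'') (Fin n'') ℤ}
    (h : MEq A B) (h' : MEq B C) : MEq A C := by
  obtain ⟨rfl, rfl, rfl⟩ := h; obtain ⟨rfl, rfl, rfl⟩ := h'; exact MEq.refl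

theorem MEq.eq {m n : ℕ} {A B : Matrix (Fin m) (Fin n) ℤ} (h : MEq A B) : A = B := by
  obtain ⟨_, _, rfl⟩ := h; rfl

theorem MEq_castM {m n m' n' : ℕ} (hm : m = m') (hn : n = n')
    (A : Matrix (Fin m) (Fin n) ℤ) : MEq (castM hm hn A) A := by
  subst hm; subst hn; exact MEq.refl

theorem castM_MEq {m n m' n' : ℕ} (hm : m = m') (hn : n = n')
    (A : Matrix (Fin m) (Fin n) ℤ) : MEq A (castM hm hn A) := (MEq_castM hm hn A).symm

theorem MEq.mul {m n p m' n' p' : ℕ} {A : Matrix (Fin m) (Fin n) ℤ}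
    {B : Matrix (Fin n) (Fin p) ℤ} {A' : Matrix (Fin m') (Fin n') ℤ}
    {B' : Matrix (Fin n') (Fin p') ℤ} (hA : MEq A A') (hB : MEq B B') :
    MEq (A * B) (A' * B') := by
  obtain ⟨rfl, rfl, rfl⟩ := hA; obtain ⟨h1, rfl, rfl⟩ := hB
  exact MEq.refl

theorem MEq.add {m n m' n' : ℕ} {A B : Matrix (Fin m) (Fin n) ℤ}
    {A' B' : Matrix (Fin m') (Fin n') ℤ} (hA : MEq A A') (hB : MEq B B') :
    MEq (A + B) (A' + B') := by
  obtain ⟨rfl, rfl, rfl⟩ := hA; obtain ⟨h1, h2, rfl⟩ := hB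
  exact MEq.refl

theorem MEq.smul {m n m' n' : ℕ} {A : Matrix (Fin m) (Fin n) ℤ}
    {A' : Matrix (Fin m') (Fin n') ℤ} (c : ℤ) (hA : MEq A A') :
    MEq (c • A) (c • A') := by
  obtain ⟨rfl, rfl, rfl⟩ := hA; exact MEq.refl

theorem MEq.kron {m n p q m' n' p' q' : ℕ} {A : Matrix (Fin m) (Fin n) ℤ}
    {B : Matrix (Fin p) (Fin q) ℤ} {A' : Matrix (Fin m') (Fin n') ℤ}
    {B' : Matrix (Fin p') (Fin q') ℤ} (hA : MEq A A') (hB : MEq B B') :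
    MEq (kron A B) (kron A' B') := by
  obtain ⟨rfl, rfl, rfl⟩ := hA; obtain ⟨rfl, rfl, rfl⟩ := hB; exact MEq.refl

theorem MEq.vstack {a b l a' b' l' : ℕ} {X : Matrix (Fin a) (Fin l) ℤ}
    {Y : Matrix (Fin b) (Fin l) ℤ} {X' : Matrix (Fin a') (Fin l') ℤ}
    {Y' : Matrix (Fin b') (Fin l') ℤ} (hX : MEq X X') (hY : MEq Y Y') :
    MEq (vstack X Y) (vstack X' Y') := by
  obtain ⟨rfl, rfl, rfl⟩ := hX; obtain ⟨rfl, h, rfl⟩ := hY; exact MEq.refl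

theorem MEq.alphaM {m l m' l' : ℕ} (N : ℕ) {X : Matrix (Fin m) (Fin l) ℤ}
    {X' : Matrix (Fin m') (Fin l') ℤ} (hX : MEq X X') :
    MEq (alphaM N X) (alphaM N X') := by
  obtain ⟨rfl, rfl, rfl⟩ := hX; exact MEq.refl

theorem MEq_Jmat {a b a' b' : ℕ} (ha : a = a') (hb : b = b') :
    MEq (Jmat a b) (Jmat a' b') := by subst ha; subst hb; exact MEq.refl

theorem MEq_Kmat {a a' : ℕ} (ha : a = a') : MEq (Kmat a) (Kmat a') := by
  subst ha; exact MEq.refl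

theorem MEq_one {a a' : ℕ} (ha : a = a') :
    MEq (1 : Matrix (Fin a) (Fin a) ℤ) (1 : Matrix (Fin a') (Fin a') ℤ) := by
  subst ha; exact MEq.refl

theorem castM_shift {a b b' c : ℕ} (h : b = b') (X : Matrix (Fin a) (Fin b) ℤ)
    (Y : Matrix (Fin b') (Fin c) ℤ) :
    castM rfl h X * Y = X * castM h.symm rfl Y := by subst h; rfl

/-! ### kron structural lemmas -/

theorem kron_apply {m n p q : ℕ} (A : Matrix (Fin m) (Fin n) ℤ)
    (B : Matrix (Fin p) (Fin q) ℤ) (i : Fin (m * p)) (j : Fin (n * q)) :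
    kron A B i j = A i.divNat j.divNat * B i.modNat j.modNat := rfl

theorem kron_mul {m n p a b c : ℕ} (A : Matrix (Fin m) (Fin n) ℤ)
    (B : Matrix (Fin a) (Fin b) ℤ) (C : Matrix (Fin n) (Fin p) ℤ)
    (D : Matrix (Fin b) (Fin c) ℤ) :
    kron A B * kron C D = kron (A * C) (B * D) := by
  unfold kron
  simp only [Matrix.reindex_apply]
  rw [Matrix.submatrix_mul_equiv, Matrix.mul_kronecker_mul]

theorem kron_add_left {m n p q : ℕ} (A B : Matrix (Fin m) (Fin n) ℤ)
    (C : Matrix (Fin p) (Fin q) ℤ) :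
    kron (A + B) C = kron A C + kron B C := by
  ext i j; simp [kron_apply, add_mul]

theorem kron_add_right {m n p q : ℕ} (A : Matrix (Fin m) (Fin n) ℤ)
    (B C : Matrix (Fin p) (Fin q) ℤ) :
    kron A (B + C) = kron A B + kron A C := by
  ext i j; simp [kron_apply, mul_add]

theorem kron_smul_right {m n p q : ℕ} (A : Matrix (Fin m) (Fin n) ℤ)
    (c : ℤ) (B : Matrix (Fin p) (Fin q) ℤ) :
    kron A (c • B) = c • kron A B := by
  ext i j; simp [kron_apply]; ring

theorem kron_smul_left {m n p q : ℕ} (A : Matrix (Fin m) (Fin n) ℤ)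
    (c : ℤ) (B : Matrix (Fin p) (Fin q) ℤ) :
    kron (c • A) B = c • kron A B := by
  ext i j; simp [kron_apply]; ring

theorem kron_Jmat_Jmat {a b c d : ℕ} :
    kron (Jmat a b) (Jmat c d) = Jmat (a * c) (b * d) := by
  ext i j
  simp [kron_apply, Jmat]

end Toolkit
section Toolkit2
open Matrix

theorem mval {m n : ℕ} (A : Matrix (Fin m) (Fin n) ℤ) {i i' : Fin m} {j j' : Fin n}
    (hi : (i : ℕ) = (i' : ℕ)) (hj : (j : ℕ) = (j' : ℕ)) : A i j = A i' j' := by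
  congr 1 <;> [exact Fin.ext hi; exact Fin.ext hj]

theorem nat_d1 (i p r : ℕ) : i / r / p = i / (p * r) := by
  rw [Nat.div_div_eq_div_mul, mul_comm]

theorem nat_d2 (i p r : ℕ) : i / r % p = i % (p * r) / r := by
  rw [mul_comm p r]; exact (Nat.mod_mul_right_div_self i r p).symm

theorem nat_d3 (i p r : ℕ) : i % r = i % (p * r) % r :=
  (Nat.mod_mod_of_dvd i ⟨p, mul_comm p r⟩).symm

theorem kron_assoc {m n p q r u : ℕ} (A : Matrix (Fin m) (Fin n) ℤ)
    (B : Matrix (Fin p) (Fin q) ℤ) (C : Matrix (Fin r) (Fin u) ℤ) :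
    MEq (kron (kron A B) C) (kron A (kron B C)) := by
  refine ⟨mul_assoc m p r, mul_assoc n q u, ?_⟩
  ext i j
  rw [castM_apply, kron_apply, kron_apply, kron_apply, kron_apply, mul_assoc]
  rw [mval A (i' := i.divNat) (j' := j.divNat) ?_ ?_,
      mval B (i' := i.modNat.divNat) (j' := j.modNat.divNat) ?_ ?_,
      mval C (i' := i.modNat.modNat) (j' := j.modNat.modNat) ?_ ?_] <;>
    simp only [Fin.coe_divNat, Fin.coe_modNat, Fin.coe_cast] <;>
    first
      | exact nat_d1 _ _ _
      | exact nat_d2 _ _ _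
      | exact nat_d3 _ _ _

theorem kron_J11_right {m n : ℕ} (X : Matrix (Fin m) (Fin n) ℤ) :
    MEq (kron X (Jmat 1 1)) X := by
  refine ⟨mul_one m, mul_one n, ?_⟩
  ext i j
  rw [castM_apply, kron_apply]
  simp [Jmat]
  exact mval X (by simp [Fin.coe_divNat, Fin.coe_cast]) (by simp [Fin.coe_divNat, Fin.coe_cast])

theorem kron_J11_left {m n : ℕ} (X : Matrix (Fin m) (Fin n) ℤ) :
    MEq (kron (Jmat 1 1) X) X := by
  refine ⟨one_mul m, one_mul n, ?_⟩
  ext i j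
  rw [castM_apply, kron_apply]
  simp [Jmat]
  exact mval X
    (by simp only [Fin.coe_modNat, Fin.coe_cast]; exact Nat.mod_eq_of_lt i.isLt)
    (by simp only [Fin.coe_modNat, Fin.coe_cast]; exact Nat.mod_eq_of_lt j.isLt)

theorem one_kron_one {a b : ℕ} :
    MEq (kron (1 : Matrix (Fin a) (Fin a) ℤ) (1 : Matrix (Fin b) (Fin b) ℤ))
      (1 : Matrix (Fin (a * b)) (Fin (a * b)) ℤ) := by
  refine ⟨rfl, rfl, ?_⟩
  ext i j
  have hb : 0 < b := by
    rcases Nat.eq_zero_or_pos b with h | h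
    · exact absurd i.isLt (by simp [h])
    · exact h
  rw [castM_apply, kron_apply]
  simp only [Matrix.one_apply, Fin.ext_iff, Fin.coe_divNat, Fin.coe_modNat, Fin.coe_cast]
  by_cases h : (i : ℕ) = (j : ℕ)
  · simp [h]
  · rw [if_neg h]
    rcases Classical.em ((i : ℕ) / b = (j : ℕ) / b) with h1 | h1
    · rcases Classical.em ((i : ℕ) % b = (j : ℕ) % b) with h2 | h2
      · exfalso
        apply h
        calc (i : ℕ) = b * ((i : ℕ) / b) + (i : ℕ) % b := (Nat.div_add_mod _ _).symm
          _ = b * ((j : ℕ) / b) + (j : ℕ) % b := by rw [h1, h2]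
          _ = (j : ℕ) := Nat.div_add_mod _ _
      · simp [h1, h2]
    · simp [h1]

theorem Jmat_mul_Jmat {a b c : ℕ} :
    Jmat a b * Jmat b c = (b : ℤ) • Jmat a c := by
  ext i j
  simp [Matrix.mul_apply, Jmat]

theorem Jmat_mul_Kmat {a m : ℕ} : Jmat a m * Kmat m = Jmat a m := by
  ext i j
  rw [Matrix.mul_apply]
  have hm : 0 < m := j.pos
  have hj := j.isLt
  rw [Finset.sum_eq_single (⟨m - 1 - (j : ℕ), by omega⟩ : Fin m)]
  · simp only [Jmat, Kmat, Matrix.of_apply, one_mul]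
    split_ifs <;> omega
  · intro k _ hk
    have hk2 := k.isLt
    simp only [Jmat, Kmat, Matrix.of_apply, one_mul]
    rw [if_neg]
    intro h
    exact hk (Fin.ext (by simp only [Fin.val_mk]; omega))
  · intro h; exact absurd (Finset.mem_univ _) h

theorem Kmat_mul_Jmat {m b : ℕ} : Kmat m * Jmat m b = Jmat m b := by
  ext i j
  rw [Matrix.mul_apply]
  have hm : 0 < m := i.pos
  have hi := i.isLt
  rw [Finset.sum_eq_single (⟨m - 1 - (i : ℕ), by omega⟩ : Fin m)]
  · simp only [Jmat, Kmat, Matrix.of_apply, mul_one]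
    split_ifs <;> omega
  · intro k _ hk
    have hk2 := k.isLt
    simp only [Jmat, Kmat, Matrix.of_apply, mul_one]
    rw [if_neg]
    intro h
    exact hk (Fin.ext (by simp only [Fin.val_mk]; omega))
  · intro h; exact absurd (Finset.mem_univ _) h

theorem Kmat_mul_Kmat {m : ℕ} : Kmat m * Kmat m = 1 := by
  ext i j
  rw [Matrix.mul_apply]
  have hm : 0 < m := i.pos
  have hi := i.isLt
  have hj := j.isLt
  rw [Finset.sum_eq_single (⟨m - 1 - (i : ℕ), by omega⟩ : Fin m)]
  · simp only [Kmat, Matrix.of_apply, Matrix.one_apply, Fin.ext_iff, Fin.val_mk]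
    split_ifs <;> omega
  · intro k _ hk
    have hk2 := k.isLt
    simp only [Kmat, Matrix.of_apply, Fin.val_mk]
    rw [if_neg, zero_mul]
    intro h
    exact hk (Fin.ext (by simp only [Fin.val_mk]; omega))
  · intro h; exact absurd (Finset.mem_univ _) h

theorem one_add_Kmat2 :
    (1 : Matrix (Fin 2) (Fin 2) ℤ) + Kmat 2 = Jmat 2 2 := by
  ext i j
  fin_cases i <;> fin_cases j <;> simp [Kmat, Jmat, Matrix.one_apply]

/-! ### Block lemmas -/

theorem vstack_mul {m₁ m₂ l d : ℕ} (X : Matrix (Fin m₁) (Fin l) ℤ)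
    (Y : Matrix (Fin m₂) (Fin l) ℤ) (Z : Matrix (Fin l) (Fin d) ℤ) :
    vstack X Y * Z = vstack (X * Z) (Y * Z) := by
  ext i j
  rcases h : finSumFinEquiv.symm i with a | a <;>
    simp [vstack, Matrix.mul_apply, h]

theorem block2_mul_vstack {a b c d l : ℕ} (A : Matrix (Fin a) (Fin c) ℤ)
    (B : Matrix (Fin a) (Fin d) ℤ) (C : Matrix (Fin b) (Fin c) ℤ)
    (D : Matrix (Fin b) (Fin d) ℤ) (X : Matrix (Fin c) (Fin l) ℤ)
    (Y : Matrix (Fin d) (Fin l) ℤ) :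
    block2 A B C D * vstack X Y = vstack (A * X + B * Y) (C * X + D * Y) := by
  unfold block2 vstack
  simp only [Matrix.reindex_apply, Equiv.refl_symm, Equiv.coe_refl]
  rw [show (Matrix.fromRows X Y).submatrix (⇑finSumFinEquiv.symm) id
      = (Matrix.fromRows X Y).submatrix (⇑finSumFinEquiv.symm) (⇑(Equiv.refl (Fin l))) from rfl]
  rw [Matrix.submatrix_mul_equiv (e₂ := finSumFinEquiv.symm)]
  rw [Matrix.fromBlocks_mul_fromRows]
  rfl

theorem hstack_mul_vstack {m l₁ l₂ d : ℕ} (A : Matrix (Fin m) (Fin l₁) ℤ)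
    (B : Matrix (Fin m) (Fin l₂) ℤ) (X : Matrix (Fin l₁) (Fin d) ℤ)
    (Y : Matrix (Fin l₂) (Fin d) ℤ) :
    hstack A B * vstack X Y = A * X + B * Y := by
  unfold hstack vstack
  simp only [Matrix.reindex_apply, Equiv.refl_symm, Equiv.coe_refl]
  rw [show (Matrix.fromRows X Y).submatrix (⇑finSumFinEquiv.symm) id
      = (Matrix.fromRows X Y).submatrix (⇑finSumFinEquiv.symm) (⇑(Equiv.refl (Fin d))) from rfl]
  rw [show (Matrix.fromCols A B).submatrix id (⇑finSumFinEquiv.symm)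
      = (Matrix.fromCols A B).submatrix (⇑(Equiv.refl (Fin m))) (⇑finSumFinEquiv.symm) from rfl]
  rw [Matrix.submatrix_mul_equiv (e₂ := finSumFinEquiv.symm)]
  rw [Matrix.fromCols_mul_fromRows]
  rfl

theorem vstack_add {m₁ m₂ l : ℕ} (X X' : Matrix (Fin m₁) (Fin l) ℤ)
    (Y Y' : Matrix (Fin m₂) (Fin l) ℤ) :
    vstack X Y + vstack X' Y' = vstack (X + X') (Y + Y') := by
  ext i j
  rcases h : finSumFinEquiv.symm i with a | a <;> simp [vstack, h]

theorem smul_vstack {m₁ m₂ l : ℕ} (c : ℤ) (X : Matrix (Fin m₁) (Fin l) ℤ)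
    (Y : Matrix (Fin m₂) (Fin l) ℤ) :
    c • vstack X Y = vstack (c • X) (c • Y) := by
  ext i j
  rcases h : finSumFinEquiv.symm i with a | a <;> simp [vstack, h]

theorem vstack_Jmat {m₁ m₂ l : ℕ} :
    vstack (Jmat m₁ l) (Jmat m₂ l) = Jmat (m₁ + m₂) l := by
  ext i j
  rcases h : finSumFinEquiv.symm i with a | a <;> simp [vstack, h, Jmat]

/-! ### alphaM lemmas -/

theorem alphaM_mul {m l d N : ℕ} (X : Matrix (Fin m) (Fin l) ℤ)
    (Y : Matrix (Fin l) (Fin d) ℤ) :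
    alphaM N X * Y = alphaM N (X * Y) := by
  ext i j
  simp [alphaM, Matrix.mul_apply]

theorem alphaM_smul {m l N : ℕ} (c : ℤ) (X : Matrix (Fin m) (Fin l) ℤ) :
    alphaM N (c • X) = c • alphaM N X := rfl

theorem alphaM_sub {m l N : ℕ} (X Y : Matrix (Fin m) (Fin l) ℤ) :
    alphaM N (X - Y) = alphaM N X - alphaM N Y := rfl

theorem alphaM_Jmat {m l N : ℕ} : alphaM N (Jmat m l) = Jmat (m / N) l := rfl

theorem alphaM_apply {m l N : ℕ} (X : Matrix (Fin m) (Fin l) ℤ) (i : Fin (m / N)) (j : Fin l) :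
    alphaM N X i j = X (Fin.castLE (Nat.div_le_self m N) i) j := rfl

theorem alphaM_kron_J {N p d : ℕ} (hN : 0 < N) (X : Matrix (Fin p) (Fin d) ℤ) :
    MEq (alphaM N (kron (Jmat N 1) X)) X := by
  refine ⟨Nat.mul_div_cancel_left p hN, one_mul d, ?_⟩
  ext i j
  rw [castM_apply, alphaM_apply, kron_apply]
  simp only [Jmat, Matrix.of_apply, one_mul]
  exact mval X
    (by simp only [Fin.coe_modNat, Fin.coe_cast, Fin.coe_castLE]; exact Nat.mod_eq_of_lt i.isLt)
    (by simp only [Fin.coe_modNat, Fin.coe_cast, Fin.coe_castLE]; exact Nat.mod_eq_of_lt j.isLt)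

end Toolkit2
section Toolkit3
open Matrix

theorem castM_Jmat {m n m' n' : ℕ} (hm : m = m') (hn : n = n') :
    castM hm hn (Jmat m n) = Jmat m' n' := by subst hm; subst hn; rfl

theorem MEq.cast_eq {m n m' n' : ℕ} {A : Matrix (Fin m) (Fin n) ℤ}
    {B : Matrix (Fin m') (Fin n') ℤ} (h : MEq A B) (h1 : m' = m) (h2 : n' = n) :
    A = castM h1 h2 B := by
  obtain ⟨rfl, rfl, rfl⟩ := h; rfl

theorem mul_castM {a b b' c c' : ℕ} (X : Matrix (Fin a) (Fin b') ℤ)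
    (h1 : b = b') (h2 : c = c') (Y : Matrix (Fin b) (Fin c) ℤ) :
    X * castM h1 h2 Y = castM rfl h2 (castM rfl h1.symm X * Y) := by
  subst h1; subst h2; rfl

theorem kron_J_one_mul {a c d : ℕ} (X : Matrix (Fin (1 * c)) (Fin d) ℤ) :
    MEq (kron (Jmat a 1) (1 : Matrix (Fin c) (Fin c) ℤ) * X)
      (kron (Jmat a 1) (castM (one_mul c) rfl X)) := by
  have h1 : MEq (kron (Jmat 1 1) (castM (one_mul c) rfl X)) X :=
    (MEq.kron MEq.refl (MEq_castM _ _ _)).trans (kron_J11_left X)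
  refine (MEq.mul MEq.refl h1.symm).trans ?_
  rw [kron_mul, Jmat_mul_Jmat, Matrix.one_mul]
  norm_num
  exact MEq.refl

/-- `P_n = J_{2^n,1} ⊗ (K_{2^n} ⊗ J_{t,t2^n})`. -/
theorem PGOOD (t n : ℕ) :
    MEq (Pmat t n)
      (kron (Jmat (2 ^ n) 1) (kron (Kmat (2 ^ n)) (Jmat t (t * 2 ^ n)))) :=
  (MEq_castM _ _ _).trans (kron_assoc _ _ _)

theorem hrowdim (t n : ℕ) : 2 ^ n * (t * 2 ^ n) = t * 4 ^ n := by
  rw [four_pow_eq]; ring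

/-- Factorization `P_n = (J_{2^n,1} ⊗ I) ⋅ (K_{2^n} ⊗ J_{t,t2^n})`. -/
theorem PFACT (t n : ℕ) :
    MEq (Pmat t n)
      (kron (Jmat (2 ^ n) 1) (1 : Matrix (Fin (t * 2 ^ n)) (Fin (t * 2 ^ n)) ℤ) *
        castM (show 2 ^ n * t = 1 * (t * 2 ^ n) by ring) rfl
          (kron (Kmat (2 ^ n)) (Jmat t (t * 2 ^ n)))) := by
  refine (PGOOD t n).trans ?_
  refine MEq.symm ?_
  refine (kron_J_one_mul _).trans ?_
  exact MEq.kron MEq.refl ((MEq_castM _ _ _).trans (MEq_castM _ _ _))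

/-- `J_{a,2^n t} ⋅ (K_{2^n} ⊗ J_{t,t2^n}) = t J`. -/
theorem J_mul_KJ (a t n : ℕ) :
    MEq (Jmat a (2 ^ n * t) * kron (Kmat (2 ^ n)) (Jmat t (t * 2 ^ n)))
      ((t : ℤ) • Jmat a (t * 4 ^ n)) := by
  have h1 : MEq (Jmat a (2 ^ n * t)) (kron (Jmat a (2 ^ n)) (Jmat 1 t)) :=
    (MEq_Jmat (mul_one a).symm rfl).trans (MEq.of_eq kron_Jmat_Jmat.symm)
  refine (MEq.mul h1 MEq.refl).trans ?_
  rw [kron_mul, Jmat_mul_Kmat, Jmat_mul_Jmat, kron_smul_right, kron_Jmat_Jmat]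
  exact MEq.smul _ (MEq_Jmat (mul_one a) (hrowdim t n))

theorem sandwich {a b : ℕ} (X : Matrix (Fin a) (Fin b) ℤ) (Y : Matrix (Fin b) (Fin a) ℤ) :
    (X * Y) * (X * Y) = X * ((Y * X) * Y) := by
  rw [Matrix.mul_assoc, ← Matrix.mul_assoc Y X Y]

/-- `P_n ⋅ P_n = t J`. -/
theorem Psq (t n : ℕ) :
    Pmat t n * Pmat t n = (t : ℤ) • Jmat (t * 4 ^ n) (t * 4 ^ n) := by
  apply MEq.eq
  refine (MEq.mul (PFACT t n) (PFACT t n)).trans ?_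
  rw [sandwich]
  have hmid : castM (show 2 ^ n * t = 1 * (t * 2 ^ n) by ring) rfl
        (kron (Kmat (2 ^ n)) (Jmat t (t * 2 ^ n))) *
        kron (Jmat (2 ^ n) 1) (1 : Matrix (Fin (t * 2 ^ n)) (Fin (t * 2 ^ n)) ℤ)
      = Jmat (1 * (t * 2 ^ n)) (1 * (t * 2 ^ n)) := by
    apply MEq.eq
    refine (MEq.mul (MEq_castM _ _ _) MEq.refl).trans ?_
    rw [kron_mul, Kmat_mul_Jmat, Matrix.mul_one, kron_Jmat_Jmat]
    exact MEq_Jmat (by ring) rfl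
  rw [hmid]
  have h3 : MEq (Jmat (1 * (t * 2 ^ n)) (1 * (t * 2 ^ n)) *
      castM (show 2 ^ n * t = 1 * (t * 2 ^ n) by ring) rfl
        (kron (Kmat (2 ^ n)) (Jmat t (t * 2 ^ n))))
      ((t : ℤ) • Jmat (1 * (t * 2 ^ n)) (t * 4 ^ n)) := by
    refine (MEq.mul (MEq_Jmat rfl (show 1 * (t * 2 ^ n) = 2 ^ n * t by ring))
      (MEq_castM _ _ _)).trans ?_
    exact J_mul_KJ (1 * (t * 2 ^ n)) t n
  refine (MEq.mul MEq.refl h3).trans ?_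
  rw [Matrix.mul_smul]
  refine MEq.smul _ ?_
  refine (kron_J_one_mul _).trans ?_
  rw [castM_Jmat, kron_Jmat_Jmat]
  exact MEq_Jmat (hrowdim t n) (one_mul _)

/-- `α_{2^{n+1}}(P_{n+1}) = K_{2^{n+1}} ⊗ J_{t, t·2^{n+1}}`. -/
theorem alphaP (t n : ℕ) :
    MEq (alphaM (2 ^ n) (Pmat t n))
      (kron (Kmat (2 ^ n)) (Jmat t (t * 2 ^ n))) :=
  (MEq.alphaM _ (PGOOD t n)).trans (alphaM_kron_J (pow_pos (by norm_num) n) _)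

/-- `K_{mn} = K_m ⊗ K_n`. -/
theorem Ksplit (m n : ℕ) : MEq (Kmat (m * n)) (kron (Kmat m) (Kmat n)) := by
  refine ⟨rfl, rfl, ?_⟩
  ext i j
  rw [castM_apply, kron_apply]
  have hi := i.isLt
  have hj := j.isLt
  have hn : 0 < n := Nat.pos_of_ne_zero fun h => by subst h; simp at hi
  have hm : 0 < m := Nat.pos_of_ne_zero fun h => by subst h; simp at hi
  simp only [Kmat, Matrix.of_apply, Fin.coe_divNat, Fin.coe_modNat, Fin.coe_cast]
  have hqi : (i : ℕ) / n < m := by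
    rw [Nat.div_lt_iff_lt_mul hn]; omega
  have hqj : (j : ℕ) / n < m := by
    rw [Nat.div_lt_iff_lt_mul hn]; omega
  have hri : (i : ℕ) % n < n := Nat.mod_lt _ hn
  have hrj : (j : ℕ) % n < n := Nat.mod_lt _ hn
  have hdi := Nat.div_add_mod (i : ℕ) n
  have hdj := Nat.div_add_mod (j : ℕ) n
  have e1 : n * (m - 1 - (i : ℕ) / n) + (n - 1 - (i : ℕ) % n) = m * n - 1 - (i : ℕ) := by
    have b1 : n * (m - 1 - (i : ℕ) / n) + n * ((i : ℕ) / n) = n * (m - 1) := by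
      rw [← Nat.mul_add]; congr 1; omega
    have b2 : n * (m - 1) + n = n * m := by rw [← Nat.mul_succ]; congr 1; omega
    have b3 : n * m = m * n := mul_comm n m
    omega
  have key : ((j : ℕ) = m * n - 1 - (i : ℕ)) ↔
      ((j : ℕ) / n = m - 1 - (i : ℕ) / n ∧ (j : ℕ) % n = n - 1 - (i : ℕ) % n) := by
    constructor
    · intro h
      have hj2 : (j : ℕ) = n * (m - 1 - (i : ℕ) / n) + (n - 1 - (i : ℕ) % n) := by omega
      constructor
      · rw [hj2, Nat.mul_add_div hn, Nat.div_eq_of_lt (show n - 1 - (i : ℕ) % n < n by omega)]; omega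
      · rw [hj2, Nat.mul_add_mod, Nat.mod_eq_of_lt (show n - 1 - (i : ℕ) % n < n by omega)]
    · rintro ⟨h1, h2⟩
      have hb : n * ((j : ℕ) / n) = n * (m - 1 - (i : ℕ) / n) := by rw [h1]
      omega
  simp only [key]
  by_cases hA : (j : ℕ) / n = m - 1 - (i : ℕ) / n <;>
    by_cases hB : (j : ℕ) % n = n - 1 - (i : ℕ) % n <;>
    simp [hA, hB]

/-- `P_{m+2} = (J_{2^{m+2},1} ⊗ K₂ ⊗ α(P_{m+1})) ⊗ J_{1,2}`. -/
theorem PR (t m : ℕ) :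
    MEq (Pmat t (m + 2))
      (kron (kron (kron (Jmat (2 ^ (m + 2)) 1) (Kmat 2))
        (alphaM (2 ^ (m + 1)) (Pmat t (m + 1)))) (Jmat 1 2)) := by
  refine (PGOOD t (m + 2)).trans ?_
  have hK : MEq (Kmat (2 ^ (m + 2))) (kron (Kmat 2) (Kmat (2 ^ (m + 1)))) :=
    (MEq_Kmat (by ring)).trans (Ksplit 2 (2 ^ (m + 1)))
  have hJ : MEq (Jmat t (t * 2 ^ (m + 2)))
      (kron (Jmat t (t * 2 ^ (m + 1))) (Jmat 1 2)) :=
    (MEq_Jmat (mul_one t).symm (by ring)).trans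
      (MEq.of_eq kron_Jmat_Jmat.symm)
  refine (MEq.kron MEq.refl (MEq.kron hK hJ)).trans ?_
  -- now : J ⊗ ((K₂ ⊗ K') ⊗ (J' ⊗ J12))
  refine (MEq.kron MEq.refl (kron_assoc _ _ _)).trans ?_
  -- J ⊗ (K₂ ⊗ (K' ⊗ (J' ⊗ J12)))
  refine (MEq.kron MEq.refl (MEq.kron MEq.refl (kron_assoc _ _ _).symm)).trans ?_
  -- J ⊗ (K₂ ⊗ ((K' ⊗ J') ⊗ J12))
  refine (MEq.kron MEq.refl (kron_assoc _ _ _).symm).trans ?_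
  -- J ⊗ ((K₂ ⊗ (K' ⊗ J')) ⊗ J12)
  refine (kron_assoc _ _ _).symm.trans ?_
  -- (J ⊗ (K₂ ⊗ (K' ⊗ J'))) ⊗ J12
  refine MEq.kron ((kron_assoc _ _ _).symm.trans
    (MEq.kron MEq.refl (alphaP t (m + 1)).symm)) MEq.refl

theorem Pone_eq (t : ℕ) : MEq (Pone t) (Pmat t 1) := by
  have h1 : MEq (Pone t) (kron (kron (Jmat 2 1) (Kmat 2)) (Jmat t (2 * t))) :=
    MEq_castM _ _ _
  have h2 : MEq (Pmat t 1) (kron (kron (Jmat (2 ^ 1) 1) (Kmat (2 ^ 1))) (Jmat t (t * 2 ^ 1))) := by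
    unfold Pmat; exact MEq_castM _ _ _
  refine h1.trans (MEq.trans ?_ h2.symm)
  exact MEq.kron (MEq.kron (MEq_Jmat (by norm_num) rfl) (MEq_Kmat (by norm_num)))
    (MEq_Jmat rfl (by ring))

theorem DECOMP (t m : ℕ) :
    MEq (kron (Jmat (2 ^ (m + 2)) 1)
        (1 : Matrix (Fin (t * 2 ^ (m + 2))) (Fin (t * 2 ^ (m + 2))) ℤ))
      (kron (kron (Jmat 2 1)
        (castM (hrowdim t (m + 1)) rfl
          (kron (Jmat (2 ^ (m + 1)) 1)
            (1 : Matrix (Fin (t * 2 ^ (m + 1))) (Fin (t * 2 ^ (m + 1))) ℤ))))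
        (1 : Matrix (Fin 2) (Fin 2) ℤ)) := by
  refine MEq.symm ?_
  have s1 : MEq (kron (kron (Jmat 2 1)
        (castM (hrowdim t (m + 1)) rfl
          (kron (Jmat (2 ^ (m + 1)) 1)
            (1 : Matrix (Fin (t * 2 ^ (m + 1))) (Fin (t * 2 ^ (m + 1))) ℤ))))
        (1 : Matrix (Fin 2) (Fin 2) ℤ))
      (kron (kron (Jmat 2 1)
        (kron (Jmat (2 ^ (m + 1)) 1)
            (1 : Matrix (Fin (t * 2 ^ (m + 1))) (Fin (t * 2 ^ (m + 1))) ℤ)))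
        (1 : Matrix (Fin 2) (Fin 2) ℤ)) :=
    MEq.kron (MEq.kron MEq.refl (MEq_castM _ _ _)) MEq.refl
  refine s1.trans ?_
  refine (kron_assoc _ _ _).trans ?_
  refine (MEq.kron MEq.refl (kron_assoc _ _ _)).trans ?_
  have s2 : MEq (kron (1 : Matrix (Fin (t * 2 ^ (m + 1))) (Fin (t * 2 ^ (m + 1))) ℤ)
        (1 : Matrix (Fin 2) (Fin 2) ℤ))
      (1 : Matrix (Fin (t * 2 ^ (m + 2))) (Fin (t * 2 ^ (m + 2))) ℤ) :=
    one_kron_one.trans (MEq_one (by ring))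
  refine (MEq.kron MEq.refl (MEq.kron MEq.refl s2)).trans ?_
  refine (kron_assoc _ _ _).symm.trans ?_
  refine MEq.kron ?_ MEq.refl
  exact (MEq.of_eq kron_Jmat_Jmat).trans (MEq_Jmat (by ring) (one_mul 1))

end Toolkit3
section Toolkit4
open Matrix

theorem castM_mul_castM {a b b' c c' a' : ℕ} (h1 : a = a') (h2 : b = b') (h2' : b = b')
    (h3 : c = c') (A : Matrix (Fin a) (Fin b) ℤ) (B : Matrix (Fin b) (Fin c) ℤ) :
    castM h1 h2 A * castM h2' h3 B = castM h1 h3 (A * B) := by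
  subst h1; subst h2; subst h3; rfl

theorem Jmat_mul_J1 {a c : ℕ} : Jmat a 1 * Jmat 1 c = Jmat a c := by
  rw [Jmat_mul_Jmat]; norm_num

theorem kron_sub_left {m n p q : ℕ} (A B : Matrix (Fin m) (Fin n) ℤ)
    (C : Matrix (Fin p) (Fin q) ℤ) :
    kron (A - B) C = kron A C - kron B C := by
  ext i j; simp [kron_apply, sub_mul]

theorem alphaM_kron_J12 {N p l : ℕ} (X : Matrix (Fin p) (Fin l) ℤ) :
    MEq (alphaM N (kron X (Jmat 1 2))) (kron (alphaM N X) (Jmat 1 2)) := by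
  refine ⟨by rw [mul_one, mul_one], rfl, ?_⟩
  ext i j
  rw [castM_apply, alphaM_apply, kron_apply, kron_apply, alphaM_apply]
  simp only [Jmat, Matrix.of_apply, mul_one]
  exact mval X (by simp [Fin.coe_divNat, Fin.coe_cast, Fin.coe_castLE, Nat.div_one]) rfl

theorem alphaM_add {m l N : ℕ} (X Y : Matrix (Fin m) (Fin l) ℤ) :
    alphaM N (X + Y) = alphaM N X + alphaM N Y := rfl

/-- `(K ⊗ J) ⋅ (J ⊗ 1) = J`, needed for `P ⋅ (J ⊗ 1)`. -/
theorem KJ_mul_J1 (t n : ℕ) :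
    castM (show 2 ^ n * t = 1 * (t * 2 ^ n) by ring) rfl
        (kron (Kmat (2 ^ n)) (Jmat t (t * 2 ^ n))) *
        kron (Jmat (2 ^ n) 1) (1 : Matrix (Fin (t * 2 ^ n)) (Fin (t * 2 ^ n)) ℤ)
      = Jmat (1 * (t * 2 ^ n)) (1 * (t * 2 ^ n)) := by
  apply MEq.eq
  refine (MEq.mul (MEq_castM _ _ _) MEq.refl).trans ?_
  rw [kron_mul, Kmat_mul_Jmat, Matrix.mul_one, kron_Jmat_Jmat]
  exact MEq_Jmat (by ring) rfl

/-- `P_n ⋅ (J_{2^n,1} ⊗ 1) = J`. -/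
theorem PROWS (t n : ℕ) :
    Pmat t n * castM (hrowdim t n) rfl
        (kron (Jmat (2 ^ n) 1) (1 : Matrix (Fin (t * 2 ^ n)) (Fin (t * 2 ^ n)) ℤ))
      = Jmat (t * 4 ^ n) (1 * (t * 2 ^ n)) := by
  rw [(PFACT t n).cast_eq (hrowdim t n) (hrowdim t n),
    castM_mul_castM (hrowdim t n) (hrowdim t n) (hrowdim t n) rfl,
    Matrix.mul_assoc, KJ_mul_J1]
  apply MEq.eq
  refine (MEq_castM _ _ _).trans ?_
  refine (kron_J_one_mul _).trans ?_
  rw [castM_Jmat, kron_Jmat_Jmat]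
  exact MEq_Jmat (hrowdim t n) (one_mul _)

end Toolkit4
section Master
open Matrix

/-- Base case of E2: each row of `B₁` has one 1 in every residue class mod `2t`. -/
theorem B1class {t v : ℕ} (B₁ : Matrix (Fin v) (Fin (4 * t)) ℤ)
    (hblockB : ∀ i : Fin v, ∃! b : Fin 2, ∀ j : Fin (4 * t),
      B₁ i j = if (j : ℕ) / (2 * t) = (b : ℕ) then 1 else 0) :
    B₁ * castM (show 2 * (2 * t) = 4 * t by ring) rfl
        (kron (Jmat 2 1) (1 : Matrix (Fin (2 * t)) (Fin (2 * t)) ℤ))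
      = Jmat v (1 * (2 * t)) := by
  ext i r
  obtain ⟨b, hb, -⟩ := hblockB i
  rw [Matrix.mul_apply]
  have hr := r.isLt
  have hbb : (b : ℕ) < 2 := b.isLt
  have ht2 : 0 < 2 * t := by omega
  have hj0 : (r : ℕ) + (b : ℕ) * (2 * t) < 4 * t := by
    have h1 : (b : ℕ) * (2 * t) ≤ 1 * (2 * t) := Nat.mul_le_mul_right _ (by omega)
    omega
  have hdiv : ((r : ℕ) + (b : ℕ) * (2 * t)) / (2 * t) = (b : ℕ) := by
    rw [Nat.add_mul_div_right _ _ ht2, Nat.div_eq_of_lt (show (r : ℕ) < 2 * t by omega)]; omega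
  have hmod : ((r : ℕ) + (b : ℕ) * (2 * t)) % (2 * t) = (r : ℕ) % (2 * t) :=
    Nat.add_mul_mod_self_right _ _ _
  rw [Finset.sum_eq_single (⟨(r : ℕ) + (b : ℕ) * (2 * t), hj0⟩ : Fin (4 * t))]
  · rw [hb, castM_apply, kron_apply]
    simp only [Jmat, Matrix.of_apply, one_mul, Matrix.one_apply, Fin.ext_iff,
      Fin.coe_divNat, Fin.coe_modNat, Fin.coe_cast, Fin.val_mk, hdiv, hmod]
    simp
  · intro j _ hj
    rw [hb, castM_apply, kron_apply]
    simp only [Jmat, Matrix.of_apply, one_mul, Matrix.one_apply, Fin.ext_iff,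
      Fin.coe_divNat, Fin.coe_modNat, Fin.coe_cast, Fin.val_mk]
    have hjlt := j.isLt
    have hdm := Nat.div_add_mod (j : ℕ) (2 * t)
    by_cases h1 : (j : ℕ) / (2 * t) = (b : ℕ)
    · by_cases h2 : (j : ℕ) % (2 * t) = (r : ℕ) % (2 * t)
      · exfalso
        apply hj
        apply Fin.ext
        simp only [Fin.val_mk]
        have hcomm : 2 * t * (b : ℕ) = (b : ℕ) * (2 * t) := by ring
        have hd2 : 2 * t * ((j : ℕ) / (2 * t)) = 2 * t * (b : ℕ) := by rw [h1]
        rw [Nat.mod_eq_of_lt (show (r : ℕ) < 2 * t by omega)] at h2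
        omega
      · rw [if_pos h1, if_neg h2]; norm_num
    · rw [if_neg h1]; norm_num
  · intro h; exact absurd (Finset.mem_univ _) h

/-- From E2'' to `B_n ⋅ P_n = t J`. -/
theorem E2P {t v : ℕ} (B₁ : Matrix (Fin v) (Fin (4 * t)) ℤ) (n : ℕ)
    (IH2 : Bmat t v B₁ n * castM (hrowdim t n) rfl
        (kron (Jmat (2 ^ n) 1) (1 : Matrix (Fin (t * 2 ^ n)) (Fin (t * 2 ^ n)) ℤ))
      = Jmat (vnum v t n) (1 * (t * 2 ^ n))) :
    Bmat t v B₁ n * Pmat t n = (t : ℤ) • Jmat (vnum v t n) (t * 4 ^ n) := by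
  rw [(PFACT t n).cast_eq (hrowdim t n) (hrowdim t n), mul_castM, ← Matrix.mul_assoc,
    castM_shift]
  rw [IH2]
  apply MEq.eq
  refine (MEq_castM _ _ _).trans ?_
  refine (MEq.mul (MEq_Jmat rfl (show 1 * (t * 2 ^ n) = 2 ^ n * t by ring))
    (MEq_castM _ _ _)).trans ?_
  exact J_mul_KJ (vnum v t n) t n

end Master

section Steps
open Matrix

theorem castM_smul {m n m' n' : ℕ} (h1 : m = m') (h2 : n = n') (c : ℤ)
    (X : Matrix (Fin m) (Fin n) ℤ) :
    castM h1 h2 (c • X) = c • castM h1 h2 X := by subst h1; subst h2; rfl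

theorem castM_add {m n m' n' : ℕ} (h1 : m = m') (h2 : n = n')
    (X Y : Matrix (Fin m) (Fin n) ℤ) :
    castM h1 h2 X + castM h1 h2 Y = castM h1 h2 (X + Y) := by subst h1; subst h2; rfl

theorem Kmat2_add_one : Kmat 2 + (1 : Matrix (Fin 2) (Fin 2) ℤ) = Jmat 2 2 := by
  rw [add_comm]; exact one_add_Kmat2

theorem step_E2 {t v : ℕ} (B₁ : Matrix (Fin v) (Fin (4 * t)) ℤ) (m : ℕ)
    (IH2 : Bmat t v B₁ (m + 1) * castM (hrowdim t (m + 1)) rfl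
        (kron (Jmat (2 ^ (m + 1)) 1)
          (1 : Matrix (Fin (t * 2 ^ (m + 1))) (Fin (t * 2 ^ (m + 1))) ℤ))
      = Jmat (vnum v t (m + 1)) (1 * (t * 2 ^ (m + 1)))) :
    Bmat t v B₁ (m + 2) * castM (hrowdim t (m + 2)) rfl
        (kron (Jmat (2 ^ (m + 2)) 1)
          (1 : Matrix (Fin (t * 2 ^ (m + 2))) (Fin (t * 2 ^ (m + 2))) ℤ))
      = Jmat (vnum v t (m + 2)) (1 * (t * 2 ^ (m + 2))) := by
  apply MEq.eq
  have hB : MEq (Bmat t v B₁ (m + 2))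
      (vstack (kron (kron (Kmat 2) (Bmat t v B₁ (m + 1))) (Jmat 1 2))
        (kron (kron (1 : Matrix (Fin 2) (Fin 2) ℤ) (Pmat t (m + 1))) (Jmat 1 2))) := by
    simp only [Bmat]
    exact MEq_castM _ _ _
  have hD : MEq (castM (hrowdim t (m + 2)) rfl
      (kron (Jmat (2 ^ (m + 2)) 1)
        (1 : Matrix (Fin (t * 2 ^ (m + 2))) (Fin (t * 2 ^ (m + 2))) ℤ)))
      (kron (kron (Jmat 2 1)
        (castM (hrowdim t (m + 1)) rfl
          (kron (Jmat (2 ^ (m + 1)) 1)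
            (1 : Matrix (Fin (t * 2 ^ (m + 1))) (Fin (t * 2 ^ (m + 1))) ℤ))))
        (1 : Matrix (Fin 2) (Fin 2) ℤ)) :=
    (MEq_castM _ _ _).trans (DECOMP t m)
  refine (MEq.mul hB hD).trans ?_
  rw [vstack_mul, kron_mul, kron_mul, kron_mul, kron_mul, Matrix.mul_one,
    Kmat_mul_Jmat, Matrix.one_mul, IH2, PROWS, kron_Jmat_Jmat, kron_Jmat_Jmat,
    kron_Jmat_Jmat, kron_Jmat_Jmat, vstack_Jmat]
  exact MEq_Jmat (by rw [vnum_succ]; ring) (by ring)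

end Steps

theorem step_E1 {t v : ℕ} (A₁ : Matrix (Fin v) (Fin v) ℤ)
    (B₁ : Matrix (Fin v) (Fin (4 * t)) ℤ) (C₁ : Matrix (Fin (4 * t)) (Fin v) ℤ)
    (s : ℤ) (m : ℕ)
    (IH1 : Amat t v A₁ B₁ C₁ (m + 1) * Bmat t v B₁ (m + 1) + s • Bmat t v B₁ (m + 1)
      = (t : ℤ) • Jmat (vnum v t (m + 1)) (t * 4 ^ (m + 1)))
    (hBP : Bmat t v B₁ (m + 1) * Pmat t (m + 1)
      = (t : ℤ) • Jmat (vnum v t (m + 1)) (t * 4 ^ (m + 1)))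
    (IH3 : Cmat t v C₁ (m + 1) * Bmat t v B₁ (m + 1) + s • Pmat t (m + 1)
      = (t : ℤ) • Jmat (t * 4 ^ (m + 1)) (t * 4 ^ (m + 1))) :
    Amat t v A₁ B₁ C₁ (m + 2) * Bmat t v B₁ (m + 2) + s • Bmat t v B₁ (m + 2)
      = (t : ℤ) • Jmat (vnum v t (m + 2)) (t * 4 ^ (m + 2)) := by
  apply MEq.eq
  have hA : MEq (Amat t v A₁ B₁ C₁ (m + 2))
      (block2 (kron (1 : Matrix (Fin 2) (Fin 2) ℤ) (Amat t v A₁ B₁ C₁ (m + 1)))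
        (kron (1 : Matrix (Fin 2) (Fin 2) ℤ) (Bmat t v B₁ (m + 1)))
        (kron (Kmat 2) (Cmat t v C₁ (m + 1)))
        (kron (Kmat 2) (Pmat t (m + 1)))) := by
    simp only [Amat]
    exact MEq_castM _ _ _
  have hB : MEq (Bmat t v B₁ (m + 2))
      (vstack
        (castM (mul_one (2 * vnum v t (m + 1))) rfl
          (kron (kron (Kmat 2) (Bmat t v B₁ (m + 1))) (Jmat 1 2)))
        (castM (mul_one (2 * (t * 4 ^ (m + 1)))) rfl
          (kron (kron (1 : Matrix (Fin 2) (Fin 2) ℤ) (Pmat t (m + 1))) (Jmat 1 2)))) := by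
    simp only [Bmat]
    exact (MEq_castM _ _ _).trans
      (MEq.vstack (castM_MEq _ _ _) (castM_MEq _ _ _))
  refine (MEq.add (MEq.mul hA hB) (MEq.smul s hB)).trans ?_
  rw [block2_mul_vstack, smul_vstack, vstack_add]
  have e1 : kron (1 : Matrix (Fin 2) (Fin 2) ℤ) (Amat t v A₁ B₁ C₁ (m + 1)) *
      castM (mul_one (2 * vnum v t (m + 1))) rfl
        (kron (kron (Kmat 2) (Bmat t v B₁ (m + 1))) (Jmat 1 2))
      = castM (mul_one (2 * vnum v t (m + 1))) rfl
        (kron (kron (Kmat 2) (Amat t v A₁ B₁ C₁ (m + 1) * Bmat t v B₁ (m + 1))) (Jmat 1 2)) := by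
    apply MEq.eq
    refine (MEq.mul (kron_J11_right _).symm (MEq_castM _ _ _)).trans ?_
    rw [kron_mul, kron_mul, Matrix.one_mul, Jmat_mul_J1]
    exact castM_MEq _ _ _
  have e2 : kron (1 : Matrix (Fin 2) (Fin 2) ℤ) (Bmat t v B₁ (m + 1)) *
      castM (mul_one (2 * (t * 4 ^ (m + 1)))) rfl
        (kron (kron (1 : Matrix (Fin 2) (Fin 2) ℤ) (Pmat t (m + 1))) (Jmat 1 2))
      = castM (mul_one (2 * vnum v t (m + 1))) rfl
        (kron (kron (1 : Matrix (Fin 2) (Fin 2) ℤ) (Bmat t v B₁ (m + 1) * Pmat t (m + 1))) (Jmat 1 2)) := by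
    apply MEq.eq
    refine (MEq.mul (kron_J11_right _).symm (MEq_castM _ _ _)).trans ?_
    rw [kron_mul, kron_mul, Matrix.one_mul, Jmat_mul_J1]
    exact castM_MEq _ _ _
  have e3 : kron (Kmat 2) (Cmat t v C₁ (m + 1)) *
      castM (mul_one (2 * vnum v t (m + 1))) rfl
        (kron (kron (Kmat 2) (Bmat t v B₁ (m + 1))) (Jmat 1 2))
      = castM (mul_one (2 * (t * 4 ^ (m + 1)))) rfl
        (kron (kron (1 : Matrix (Fin 2) (Fin 2) ℤ) (Cmat t v C₁ (m + 1) * Bmat t v B₁ (m + 1))) (Jmat 1 2)) := by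
    apply MEq.eq
    refine (MEq.mul (kron_J11_right _).symm (MEq_castM _ _ _)).trans ?_
    rw [kron_mul, kron_mul, Kmat_mul_Kmat, Jmat_mul_J1]
    exact castM_MEq _ _ _
  have e4 : kron (Kmat 2) (Pmat t (m + 1)) *
      castM (mul_one (2 * (t * 4 ^ (m + 1)))) rfl
        (kron (kron (1 : Matrix (Fin 2) (Fin 2) ℤ) (Pmat t (m + 1))) (Jmat 1 2))
      = castM (mul_one (2 * (t * 4 ^ (m + 1)))) rfl
        (kron (kron (Kmat 2) (Pmat t (m + 1) * Pmat t (m + 1))) (Jmat 1 2)) := by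
    apply MEq.eq
    refine (MEq.mul (kron_J11_right _).symm (MEq_castM _ _ _)).trans ?_
    rw [kron_mul, kron_mul, Matrix.mul_one, Jmat_mul_J1]
    exact castM_MEq _ _ _
  rw [e1, e2, e3, e4, ← castM_smul, ← castM_smul, castM_add, castM_add, castM_add, castM_add]
  rw [hBP, Psq]
  have top : kron (kron (Kmat 2) (Amat t v A₁ B₁ C₁ (m + 1) * Bmat t v B₁ (m + 1))) (Jmat 1 2) +
        kron (kron (1 : Matrix (Fin 2) (Fin 2) ℤ)
          ((t : ℤ) • Jmat (vnum v t (m + 1)) (t * 4 ^ (m + 1)))) (Jmat 1 2) +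
        s • kron (kron (Kmat 2) (Bmat t v B₁ (m + 1))) (Jmat 1 2)
      = (t : ℤ) • Jmat ((2 * vnum v t (m + 1)) * 1) ((2 * (t * 4 ^ (m + 1))) * 2) := by
    rw [← kron_smul_left, ← kron_smul_right, add_right_comm, ← kron_add_left,
      ← kron_add_right, IH1]
    rw [kron_smul_right, kron_smul_right, kron_smul_left, kron_smul_left, ← smul_add,
      ← kron_add_left, ← kron_add_left, Kmat2_add_one, kron_Jmat_Jmat, kron_Jmat_Jmat]
  have bot : kron (kron (1 : Matrix (Fin 2) (Fin 2) ℤ)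
          (Cmat t v C₁ (m + 1) * Bmat t v B₁ (m + 1))) (Jmat 1 2) +
        kron (kron (Kmat 2) ((t : ℤ) • Jmat (t * 4 ^ (m + 1)) (t * 4 ^ (m + 1)))) (Jmat 1 2) +
        s • kron (kron (1 : Matrix (Fin 2) (Fin 2) ℤ) (Pmat t (m + 1))) (Jmat 1 2)
      = (t : ℤ) • Jmat ((2 * (t * 4 ^ (m + 1))) * 1) ((2 * (t * 4 ^ (m + 1))) * 2) := by
    rw [← kron_smul_left, ← kron_smul_right, add_right_comm, ← kron_add_left,
      ← kron_add_right, IH3]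
    rw [kron_smul_right, kron_smul_right, kron_smul_left, kron_smul_left, ← smul_add,
      ← kron_add_left, ← kron_add_left, one_add_Kmat2, kron_Jmat_Jmat, kron_Jmat_Jmat]
  rw [top, bot, castM_smul, castM_smul, castM_Jmat, castM_Jmat]
  rw [← smul_vstack, vstack_Jmat]
  exact MEq.smul _ (MEq_Jmat (by rw [vnum_succ]) (by ring))
section StepE3
open Matrix

theorem alphaM_castM {m m' l l' N : ℕ} (h1 : m = m') (h2 : l = l')
    (X : Matrix (Fin m) (Fin l) ℤ) :
    alphaM N (castM h1 h2 X) = castM (by rw [h1]) h2 (alphaM N X) := by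
  subst h1; subst h2; rfl

theorem step_E3 {t v : ℕ} (B₁ : Matrix (Fin v) (Fin (4 * t)) ℤ)
    (C₁ : Matrix (Fin (4 * t)) (Fin v) ℤ) (s : ℤ) (m : ℕ)
    (IH3 : Cmat t v C₁ (m + 1) * Bmat t v B₁ (m + 1) + s • Pmat t (m + 1)
      = (t : ℤ) • Jmat (t * 4 ^ (m + 1)) (t * 4 ^ (m + 1))) :
    Cmat t v C₁ (m + 2) * Bmat t v B₁ (m + 2) + s • Pmat t (m + 2)
      = (t : ℤ) • Jmat (t * 4 ^ (m + 2)) (t * 4 ^ (m + 2)) := by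
  apply MEq.eq
  set N := 2 ^ (m + 1) with hN
  set B' := Bmat t v B₁ (m + 1) with hB'
  set C' := Cmat t v C₁ (m + 1) with hC'
  set P' := Pmat t (m + 1) with hP'
  have pf : (t * 4 ^ (m + 1) * 1) / 2 ^ (m + 1) = t * 4 ^ (m + 1) / 2 ^ (m + 1) := by
    rw [mul_one]
  have hC : MEq (Cmat t v C₁ (m + 2))
      (hstack
        (kron (kron (Jmat (2 ^ (m + 2)) 1) (1 : Matrix (Fin 2) (Fin 2) ℤ)) (alphaM N C'))
        (kron (kron (Jmat (2 ^ (m + 2)) 1) (1 : Matrix (Fin 2) (Fin 2) ℤ)) (alphaM N P'))) := by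
    simp only [Cmat]
    exact MEq_castM _ _ _
  have hB : MEq (Bmat t v B₁ (m + 2))
      (vstack
        (castM (show (2 * vnum v t (m + 1)) * 1 = (1 * 2) * vnum v t (m + 1) by ring) rfl
          (kron (kron (Kmat 2) B') (Jmat 1 2)))
        (castM (show (2 * (t * 4 ^ (m + 1))) * 1 = (1 * 2) * (t * 4 ^ (m + 1)) by ring) rfl
          (kron (kron (1 : Matrix (Fin 2) (Fin 2) ℤ) P') (Jmat 1 2)))) := by
    simp only [Bmat]
    exact (MEq_castM _ _ _).trans
      (MEq.vstack (castM_MEq _ _ _) (castM_MEq _ _ _))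
  have hmain : MEq (Cmat t v C₁ (m + 2) * Bmat t v B₁ (m + 2))
      (hstack
        (kron (kron (Jmat (2 ^ (m + 2)) 1) (1 : Matrix (Fin 2) (Fin 2) ℤ)) (alphaM N C'))
        (kron (kron (Jmat (2 ^ (m + 2)) 1) (1 : Matrix (Fin 2) (Fin 2) ℤ)) (alphaM N P')) *
       vstack
        (castM (show (2 * vnum v t (m + 1)) * 1 = (1 * 2) * vnum v t (m + 1) by ring) rfl
          (kron (kron (Kmat 2) B') (Jmat 1 2)))
        (castM (show (2 * (t * 4 ^ (m + 1))) * 1 = (1 * 2) * (t * 4 ^ (m + 1)) by ring) rfl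
          (kron (kron (1 : Matrix (Fin 2) (Fin 2) ℤ) P') (Jmat 1 2)))) := MEq.mul hC hB
  -- decompositions of the two vstack blocks
  have hR : MEq (castM (show (2 * vnum v t (m + 1)) * 1 = (1 * 2) * vnum v t (m + 1) by ring) rfl
      (kron (kron (Kmat 2) B') (Jmat 1 2)))
      (kron (kron (Jmat 1 1) (Kmat 2))
        (castM (mul_one (vnum v t (m + 1))) rfl (kron B' (Jmat 1 2)))) :=
    (MEq_castM _ _ _).trans ((kron_assoc _ _ _).trans
      (MEq.kron (kron_J11_left _).symm (castM_MEq _ _ _)))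
  have hS : MEq (castM (show (2 * (t * 4 ^ (m + 1))) * 1 = (1 * 2) * (t * 4 ^ (m + 1)) by ring) rfl
      (kron (kron (1 : Matrix (Fin 2) (Fin 2) ℤ) P') (Jmat 1 2)))
      (kron (kron (Jmat 1 1) (1 : Matrix (Fin 2) (Fin 2) ℤ))
        (castM (mul_one (t * 4 ^ (m + 1))) rfl (kron P' (Jmat 1 2)))) :=
    (MEq_castM _ _ _).trans ((kron_assoc _ _ _).trans
      (MEq.kron (kron_J11_left _).symm (castM_MEq _ _ _)))
  have g1 : C' * castM (mul_one (vnum v t (m + 1))) rfl (kron B' (Jmat 1 2))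
      = castM (mul_one (t * 4 ^ (m + 1))) rfl (kron (C' * B') (Jmat 1 2)) := by
    apply MEq.eq
    refine (MEq.mul (kron_J11_right _).symm (MEq_castM _ _ _)).trans ?_
    rw [kron_mul, Jmat_mul_J1]
    exact castM_MEq _ _ _
  have g2 : P' * castM (mul_one (t * 4 ^ (m + 1))) rfl (kron P' (Jmat 1 2))
      = castM (mul_one (t * 4 ^ (m + 1))) rfl (kron (P' * P') (Jmat 1 2)) := by
    apply MEq.eq
    refine (MEq.mul (kron_J11_right _).symm (MEq_castM _ _ _)).trans ?_
    rw [kron_mul, Jmat_mul_J1]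
    exact castM_MEq _ _ _
  have F1 : MEq (kron (kron (Jmat (2 ^ (m + 2)) 1) (1 : Matrix (Fin 2) (Fin 2) ℤ)) (alphaM N C') *
      castM (show (2 * vnum v t (m + 1)) * 1 = (1 * 2) * vnum v t (m + 1) by ring) rfl
        (kron (kron (Kmat 2) B') (Jmat 1 2)))
      (kron (kron (Jmat (2 ^ (m + 2)) 1) (Kmat 2))
        (castM pf rfl (alphaM N (kron (C' * B') (Jmat 1 2))))) := by
    refine (MEq.mul MEq.refl hR).trans ?_
    rw [kron_mul, kron_mul, Jmat_mul_J1, Matrix.one_mul, alphaM_mul, g1, alphaM_castM]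
    exact MEq.refl
  have F2 : MEq (kron (kron (Jmat (2 ^ (m + 2)) 1) (1 : Matrix (Fin 2) (Fin 2) ℤ)) (alphaM N P') *
      castM (show (2 * (t * 4 ^ (m + 1))) * 1 = (1 * 2) * (t * 4 ^ (m + 1)) by ring) rfl
        (kron (kron (1 : Matrix (Fin 2) (Fin 2) ℤ) P') (Jmat 1 2)))
      (kron (kron (Jmat (2 ^ (m + 2)) 1) (1 : Matrix (Fin 2) (Fin 2) ℤ))
        (castM pf rfl (alphaM N (kron (P' * P') (Jmat 1 2))))) := by
    refine (MEq.mul MEq.refl hS).trans ?_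
    rw [kron_mul, kron_mul, Jmat_mul_J1, Matrix.one_mul, alphaM_mul, g2, alphaM_castM]
    exact MEq.refl
  have hP2 : MEq (Pmat t (m + 2))
      (kron (kron (Jmat (2 ^ (m + 2)) 1) (Kmat 2))
        (castM pf rfl (alphaM N (kron P' (Jmat 1 2))))) :=
    (PR t m).trans ((kron_assoc _ _ _).trans
      (MEq.kron MEq.refl ((alphaM_kron_J12 P').symm.trans (castM_MEq pf rfl _))))
  have F3 : MEq (s • Pmat t (m + 2))
      (kron (kron (Jmat (2 ^ (m + 2)) 1) (Kmat 2))
        (castM pf rfl (alphaM N (kron (s • P') (Jmat 1 2))))) := by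
    refine (MEq.smul s hP2).trans (MEq.of_eq ?_)
    rw [kron_smul_left, alphaM_smul, castM_smul, kron_smul_right]
  have hCB2 : MEq (Cmat t v C₁ (m + 2) * Bmat t v B₁ (m + 2))
      (kron (kron (Jmat (2 ^ (m + 2)) 1) (Kmat 2))
        (castM pf rfl (alphaM N (kron (C' * B') (Jmat 1 2)))) +
       kron (kron (Jmat (2 ^ (m + 2)) 1) (1 : Matrix (Fin 2) (Fin 2) ℤ))
        (castM pf rfl (alphaM N (kron (P' * P') (Jmat 1 2))))) := by
    refine hmain.trans ?_
    rw [hstack_mul_vstack]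
    exact MEq.add F1 F2
  refine (MEq.add hCB2 F3).trans ?_
  rw [Psq, add_right_comm, ← kron_add_right, castM_add, ← alphaM_add, ← kron_add_left, IH3]
  rw [kron_smul_left, alphaM_smul, castM_smul, kron_smul_right, kron_smul_right,
    ← smul_add, ← kron_add_left, ← kron_add_right, Kmat2_add_one]
  simp only [kron_Jmat_Jmat]
  rw [alphaM_Jmat, castM_Jmat]
  simp only [kron_Jmat_Jmat]
  exact MEq.smul _ (MEq_Jmat (by rw [t_four_pow_div, four_pow_eq]; ring) (by ring))

end StepE3
section MasterInd
open Matrix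

theorem base_E1 {t v : ℕ} (A₁ : Matrix (Fin v) (Fin v) ℤ)
    (B₁ : Matrix (Fin v) (Fin (4 * t)) ℤ) (C₁ : Matrix (Fin (4 * t)) (Fin v) ℤ) (s : ℤ)
    (hA1B1 : A₁ * B₁ + s • B₁ = (t : ℤ) • Jmat v (4 * t)) :
    Amat t v A₁ B₁ C₁ 1 * Bmat t v B₁ 1 + s • Bmat t v B₁ 1
      = (t : ℤ) • Jmat (vnum v t 1) (t * 4 ^ 1) := by
  apply MEq.eq
  have hA : MEq (Amat t v A₁ B₁ C₁ 1) A₁ := by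
    simp only [Amat]; exact MEq_castM _ _ _
  have hB : MEq (Bmat t v B₁ 1) B₁ := by
    simp only [Bmat]; exact MEq_castM _ _ _
  refine (MEq.add (MEq.mul hA hB) (MEq.smul s hB)).trans ?_
  rw [hA1B1]
  exact MEq.smul _ (MEq_Jmat (vnum_one v t).symm (by ring))

theorem base_E3 {t v : ℕ} (B₁ : Matrix (Fin v) (Fin (4 * t)) ℤ)
    (C₁ : Matrix (Fin (4 * t)) (Fin v) ℤ) (s : ℤ)
    (hC1B1 : C₁ * B₁ + s • Pone t = (t : ℤ) • Jmat (4 * t) (4 * t)) :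
    Cmat t v C₁ 1 * Bmat t v B₁ 1 + s • Pmat t 1
      = (t : ℤ) • Jmat (t * 4 ^ 1) (t * 4 ^ 1) := by
  apply MEq.eq
  have hC : MEq (Cmat t v C₁ 1) C₁ := by
    simp only [Cmat]; exact MEq_castM _ _ _
  have hB : MEq (Bmat t v B₁ 1) B₁ := by
    simp only [Bmat]; exact MEq_castM _ _ _
  refine (MEq.add (MEq.mul hC hB) (MEq.smul s (Pone_eq t).symm)).trans ?_
  rw [hC1B1]
  exact MEq.smul _ (MEq_Jmat (by ring) (by ring))

theorem base_E2 {t v : ℕ} (B₁ : Matrix (Fin v) (Fin (4 * t)) ℤ)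
    (hblockB : ∀ i : Fin v, ∃! b : Fin 2, ∀ j : Fin (4 * t),
      B₁ i j = if (j : ℕ) / (2 * t) = (b : ℕ) then 1 else 0) :
    Bmat t v B₁ 1 * castM (hrowdim t 1) rfl
        (kron (Jmat (2 ^ 1) 1) (1 : Matrix (Fin (t * 2 ^ 1)) (Fin (t * 2 ^ 1)) ℤ))
      = Jmat (vnum v t 1) (1 * (t * 2 ^ 1)) := by
  apply MEq.eq
  have hB : MEq (Bmat t v B₁ 1) B₁ := by
    simp only [Bmat]; exact MEq_castM _ _ _
  have h2 : MEq (castM (hrowdim t 1) rfl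
      (kron (Jmat (2 ^ 1) 1) (1 : Matrix (Fin (t * 2 ^ 1)) (Fin (t * 2 ^ 1)) ℤ)))
      (castM (show 2 * (2 * t) = 4 * t by ring) rfl
        (kron (Jmat 2 1) (1 : Matrix (Fin (2 * t)) (Fin (2 * t)) ℤ))) :=
    (MEq_castM _ _ _).trans ((MEq.kron (MEq_Jmat (by norm_num) rfl)
      (MEq_one (by ring))).trans (castM_MEq _ _ _))
  refine (MEq.mul hB h2).trans ?_
  rw [B1class B₁ hblockB]
  exact MEq_Jmat (vnum_one v t).symm (by ring)

theorem master {t v : ℕ} (A₁ : Matrix (Fin v) (Fin v) ℤ)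
    (B₁ : Matrix (Fin v) (Fin (4 * t)) ℤ) (C₁ : Matrix (Fin (4 * t)) (Fin v) ℤ) (s : ℤ)
    (hA1B1 : A₁ * B₁ + s • B₁ = (t : ℤ) • Jmat v (4 * t))
    (hC1B1 : C₁ * B₁ + s • Pone t = (t : ℤ) • Jmat (4 * t) (4 * t))
    (hblockB : ∀ i : Fin v, ∃! b : Fin 2, ∀ j : Fin (4 * t),
      B₁ i j = if (j : ℕ) / (2 * t) = (b : ℕ) then 1 else 0) :
    ∀ n, 1 ≤ n →
      (Amat t v A₁ B₁ C₁ n * Bmat t v B₁ n + s • Bmat t v B₁ n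
          = (t : ℤ) • Jmat (vnum v t n) (t * 4 ^ n)) ∧
      (Bmat t v B₁ n * castM (hrowdim t n) rfl
          (kron (Jmat (2 ^ n) 1) (1 : Matrix (Fin (t * 2 ^ n)) (Fin (t * 2 ^ n)) ℤ))
        = Jmat (vnum v t n) (1 * (t * 2 ^ n))) ∧
      (Cmat t v C₁ n * Bmat t v B₁ n + s • Pmat t n
          = (t : ℤ) • Jmat (t * 4 ^ n) (t * 4 ^ n)) := by
  intro n
  induction n with
  | zero => intro hn; exact absurd hn (by norm_num)
  | succ m IH =>
    intro _
    match m, IH with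
    | 0, _ =>
      exact ⟨base_E1 A₁ B₁ C₁ s hA1B1, base_E2 B₁ hblockB, base_E3 B₁ C₁ s hC1B1⟩
    | (k + 1), IH =>
      obtain ⟨IH1, IH2, IH3⟩ := IH (by omega)
      exact ⟨step_E1 A₁ B₁ C₁ s k IH1 (E2P B₁ (k + 1) IH2) IH3,
        step_E2 B₁ k IH2, step_E3 B₁ C₁ s k IH3⟩

end MasterInd

/-- Equation (15): `A_n · B_n + s·B_n = t · J_{v_n, t·4^n}`. -/
theorem Amat_mul_Bmat
    (t lam v k : ℕ) (ht : 0 < t) (hv : 0 < v) (hk : 0 < k)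
    (s : ℤ) (hs : s = (t : ℤ) - (lam : ℤ)) (hspos : 0 < s)
    (A₁ : Matrix (Fin v) (Fin v) ℤ)
    (B₁ : Matrix (Fin v) (Fin (4 * t)) ℤ) (C₁ : Matrix (Fin (4 * t)) (Fin v) ℤ)
    (hA01 : ∀ i j, A₁ i j = 0 ∨ A₁ i j = 1)
    (hB01 : ∀ i j, B₁ i j = 0 ∨ B₁ i j = 1) (hC01 : ∀ i j, C₁ i j = 0 ∨ C₁ i j = 1)
    (hA1 : A₁ * A₁ + s • A₁ = (t : ℤ) • Jmat v v)
    (hA1J : A₁ * Jmat v v = (k : ℤ) • Jmat v v)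
    (hJA1 : Jmat v v * A₁ = (k : ℤ) • Jmat v v)
    (hB1C1 : B₁ * C₁ = (t : ℤ) • Jmat v v)
    (hB1P1 : B₁ * Pone t = (t : ℤ) • Jmat v (4 * t))
    (hP1C1 : Pone t * C₁ = (t : ℤ) • Jmat (4 * t) v)
    (hA1B1 : A₁ * B₁ + s • B₁ = (t : ℤ) • Jmat v (4 * t))
    (hC1A1 : C₁ * A₁ + s • C₁ = (t : ℤ) • Jmat (4 * t) v)
    (hC1B1 : C₁ * B₁ + s • Pone t = (t : ℤ) • Jmat (4 * t) (4 * t))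
    (hBJ : B₁ * Jmat (4 * t) (4 * t) = (2 * (t : ℤ)) • Jmat v (4 * t))
    (hJB : Jmat v v * B₁ = (k : ℤ) • Jmat v (4 * t))
    (hCJ : C₁ * Jmat v v = (k : ℤ) • Jmat (4 * t) v)
    (hJC : Jmat (4 * t) (4 * t) * C₁ = (2 * (t : ℤ)) • Jmat (4 * t) v)
    (hblockB : ∀ i : Fin v, ∃! b : Fin 2, ∀ j : Fin (4 * t),
      B₁ i j = if (j : ℕ) / (2 * t) = (b : ℕ) then 1 else 0)
    (hblockC : ∀ j : Fin v, ∀ b : Fin 2,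
      (Finset.univ.filter fun i : Fin (4 * t) =>
        (i : ℕ) / (2 * t) = (b : ℕ) ∧ C₁ i j = 1).card = t)
    (n : ℕ) (hn : 1 ≤ n) :
    Amat t v A₁ B₁ C₁ n * Bmat t v B₁ n + s • Bmat t v B₁ n =
      (t : ℤ) • Jmat (vnum v t n) (t * 4 ^ n) := by
  exact (master A₁ B₁ C₁ s hA1B1 hC1B1 hblockB n hn).1
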